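/- For each integer k ≥ 3 there exists an ε > 0 such that for all integers n and c, and for each orientation C of the k-cycle consisting of exactly two blocks, one of which has length one, there exists a digraph D without loops or parallel arcs with |V(D)| ≥ n, χ(D) ≥ c, and minimum out-degree at least ε·|V(D)|, such that D does not contain a subdigraph isomorphic to C. -/

import Mathlib

/-- A digraph `D` (given by its arc relation `E`) contains the digraph given by the
arc relation `F` as a subdigraph: there is an injective map of the vertices preserving arcs. -/
def ContainsDigraph {V W : Type*} (E : V → V → Prop) (F : W → W → Prop) : Prop :=
  ∃ f : W → V, Function.Injective f ∧ ∀ u v : W, F u v → E (f u) (f v)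

/-- The orientation of the `k`-cycle determined by `o : ZMod k → Bool`:
the edge `i` of the cycle joins `i` and `i + 1`, and is oriented `i → i + 1`
when `o i = true`, and `i + 1 → i` when `o i = false`. -/
def cycleOrient {k : ℕ} (o : ZMod k → Bool) : ZMod k → ZMod k → Prop :=
  fun u v => (o u = true ∧ v = u + 1) ∨ (o v = false ∧ u = v + 1)

/-- The arc obtained by orienting the edge `i` of the `k`-cycle according to `o`.
Injectivity of `cycleArc o` says that distinct edges yield distinct arcs, i.e. the
orientation is a genuine digraph without parallel arcs (this is automatic for `k ≥ 3`). -/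
def cycleArc {k : ℕ} (o : ZMod k → Bool) (i : ZMod k) : ZMod k × ZMod k :=
  if o i then (i, i + 1) else (i + 1, i)

open Classical in
/-- The number of blocks of the orientation of the `k`-cycle given by `o`:
a directed cycle has a single block, and otherwise the blocks (maximal directed
subpaths) correspond bijectively to the indices `i` at which the orientation
changes between the consecutive edges `i` and `i + 1`. -/
noncomputable def blockCount {k : ℕ} (o : ZMod k → Bool) : ℕ :=
  if ∀ i, o i = o 0 then 1 else {i : ZMod k | o i ≠ o (i + 1)}.ncard

/-- The orientation of the `k`-cycle given by `o` has a block of length one, i.e.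
some edge `i + 1` is a maximal directed subpath on its own. -/
def hasShortBlock {k : ℕ} (o : ZMod k → Bool) : Prop :=
  ∃ i : ZMod k, o i ≠ o (i + 1) ∧ o (i + 1) ≠ o (i + 2)

namespace FlippedAux


def XV (d t : ℕ) : Type := {v : Fin d → Fin t // StrictMono v}

noncomputable instance (d t : ℕ) : Fintype (XV d t) := by
  classical
  exact Subtype.fintype _

def XArc {d t : ℕ} (u v : XV d t) : Prop :=
  ∀ i : ℕ, ∀ h : i + 1 < d, v.1 ⟨i, by omega⟩ = u.1 ⟨i+1, h⟩

lemma XArc_ne {d t : ℕ} (hd : 2 ≤ d) {u v : XV d t} (h : XArc u v) : u ≠ v := by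
  intro huv
  have h0 := h 0 (by omega)
  rw [huv] at h0
  exact absurd h0 (ne_of_lt (v.2 (show (⟨0, by omega⟩ : Fin d) < ⟨1, by omega⟩ from
    Fin.mk_lt_mk.mpr (by omega))))

/-- the pair `(a,b)` as a vertex of the `2`-shift. -/
def pairX {t : ℕ} (a b : Fin t) (hab : a < b) : XV 2 t :=
  ⟨fun i => if (i : ℕ) = 0 then a else b, by
    intro x y hxy
    have hx : (x : ℕ) < (y : ℕ) := hxy
    have hy2 : (y : ℕ) < 2 := y.2
    have hx0 : (x : ℕ) = 0 := by omega
    have hy1 : (y : ℕ) = 1 := by omega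
    simp [hx0, hy1, hab]⟩

@[simp] lemma pairX_zero {t : ℕ} (a b : Fin t) (hab : a < b) (h : (0:ℕ) < 2) :
    (pairX a b hab).1 ⟨0, h⟩ = a := by simp [pairX]

@[simp] lemma pairX_one {t : ℕ} (a b : Fin t) (hab : a < b) (h : (1:ℕ) < 2) :
    (pairX a b hab).1 ⟨1, h⟩ = b := by simp [pairX]

/-- extend a `(e+2)`-tuple by a new largest element. -/
def extX {e t : ℕ} (g : XV (e+2) t) (b : Fin t)
    (hb : g.1 ⟨e+1, by omega⟩ < b) : XV (e+3) t :=
  ⟨fun i => if h : (i : ℕ) < e+2 then g.1 ⟨i, h⟩ else b, by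
    intro x y hxy
    have hxy' : (x : ℕ) < (y : ℕ) := hxy
    by_cases hx : (x : ℕ) < e+2 <;> by_cases hy : (y : ℕ) < e+2
    · simp only [dif_pos hx, dif_pos hy]
      exact g.2 (show (⟨x, hx⟩ : Fin (e+2)) < ⟨y, hy⟩ from Fin.mk_lt_mk.mpr hxy')
    · simp only [dif_pos hx, dif_neg hy]
      calc g.1 ⟨x, hx⟩ ≤ g.1 ⟨e+1, by omega⟩ := by
            apply g.2.monotone
            exact Fin.mk_le_mk.mpr (by omega)
        _ < b := hb
    · omega
    · exfalso
      have : (y : ℕ) < e + 3 := y.2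
      omega⟩

lemma extX_lt {e t : ℕ} (g : XV (e+2) t) (b : Fin t) (hb : g.1 ⟨e+1, by omega⟩ < b)
    (i : ℕ) (h : i < e + 3) (h2 : i < e + 2) :
    (extX g b hb).1 ⟨i, h⟩ = g.1 ⟨i, h2⟩ := by
  simp [extX, dif_pos h2]

lemma extX_last {e t : ℕ} (g : XV (e+2) t) (b : Fin t) (hb : g.1 ⟨e+1, by omega⟩ < b)
    (i : ℕ) (h : i < e + 3) (h2 : i = e + 2) :
    (extX g b hb).1 ⟨i, h⟩ = b := by
  simp [extX, h2]

def tw : ℕ → ℕ → ℕ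
  | 0, q => q
  | 1, q => q
  | d+2, q => tw (d+1) (2^q)

lemma tw_mono : ∀ d : ℕ, ∀ {q q' : ℕ}, q ≤ q' → tw d q ≤ tw d q' := by
  intro d
  induction d using Nat.strong_induction_on with
  | _ d ih =>
    match d with
    | 0 => intro q q' h; simpa [tw] using h
    | 1 => intro q q' h; simpa [tw] using h
    | (e+2) =>
      intro q q' h
      simp only [tw]
      exact ih (e+1) (by omega) (Nat.pow_le_pow_right (by norm_num) h)

/-- Chromatic lower bound for shift digraphs: a proper colouring of the
`(e+2)`-tuple shift on `[t]` with `q` colours forces `t ≤ tw (e+2) q`. -/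
lemma shift_bound (t : ℕ) :
    ∀ e : ℕ, ∀ (α : Type) [Fintype α], ∀ col : XV (e+2) t → α,
      (∀ u v, XArc u v → col u ≠ col v) → t ≤ tw (e+2) (Fintype.card α) := by
  intro e
  induction e with
  | zero =>
    intro α _ col hcol
    classical
    -- map a ↦ set of colours of pairs (a, b), b > a
    set ι : Fin t → Finset α := fun a =>
      (Finset.univ : Finset {b : Fin t // a < b}).image
        (fun b => col (pairX a b.1 b.2)) with hι
    have key : ∀ a a' : Fin t, a < a' → ι a ≠ ι a' := by
      intro a a' haa heq
      have hmem : col (pairX a a' haa) ∈ ι a := by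
        rw [hι]
        exact Finset.mem_image.mpr ⟨⟨a', haa⟩, Finset.mem_univ _, rfl⟩
      rw [heq, hι] at hmem
      obtain ⟨b, -, hbeq⟩ := Finset.mem_image.mp hmem
      refine hcol (pairX a a' haa) (pairX a' b.1 b.2) ?_ hbeq.symm
      intro i hi
      have hi0 : i = 0 := by omega
      subst hi0
      simp [pairX]
    have hinj : Function.Injective ι := by
      intro a a' h
      by_contra hne
      rcases lt_or_gt_of_ne hne with hlt | hlt
      · exact key a a' hlt h
      · exact key a' a hlt h.symm
    have := Fintype.card_le_of_injective ι hinj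
    simp only [Fintype.card_fin, Fintype.card_finset] at this
    simpa [tw] using this
  | succ e ih =>
    intro α _ col hcol
    classical
    set col' : XV (e+2) t → Finset α := fun g =>
      (Finset.univ : Finset {b : Fin t // g.1 ⟨e+1, by omega⟩ < b}).image
        (fun b => col (extX g b.1 b.2)) with hcol'def
    have hproper : ∀ g h, XArc g h → col' g ≠ col' h := by
      intro g h harc
      have hlasteq : h.1 ⟨e, by omega⟩ = g.1 ⟨e+1, by omega⟩ := harc e (by omega)
      have hlast : g.1 ⟨e+1, by omega⟩ < h.1 ⟨e+1, by omega⟩ := by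
        rw [← hlasteq]
        exact h.2 (Fin.mk_lt_mk.mpr (by omega))
      set w : XV (e+3) t := extX g (h.1 ⟨e+1, by omega⟩) hlast with hw
      have hin : col w ∈ col' g := by
        rw [hcol'def]
        exact Finset.mem_image.mpr ⟨⟨_, hlast⟩, Finset.mem_univ _, rfl⟩
      have hnotin : col w ∉ col' h := by
        rw [hcol'def]
        intro hmem
        obtain ⟨b, -, hbeq⟩ := Finset.mem_image.mp hmem
        refine hcol w (extX h b.1 b.2) ?_ hbeq.symm
        intro i hi
        show (extX h b.1 b.2).1 ⟨i, by omega⟩ = (extX g _ hlast).1 ⟨i+1, hi⟩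
        by_cases hi2 : i + 1 < e + 2
        · rw [extX_lt h b.1 b.2 i (by omega) (by omega),
              extX_lt g _ hlast (i+1) hi hi2]
          exact harc i hi2
        · rw [extX_lt h b.1 b.2 i (by omega) (by omega),
              extX_last g _ hlast (i+1) hi (by omega)]
          exact congrArg h.1 (Fin.ext (by omega : i = e+1))
      intro heq
      rw [heq] at hin
      exact hnotin hin
    have := ih (Finset α) col' hproper
    rw [Fintype.card_finset] at this
    exact this

/-! ### The digraph `D` -/

/-- Vertex type: shift-tuples ⊕ (cut-sets ⊕ cyclic layers). -/
abbrev VD (e t s : ℕ) : Type :=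
  XV (e+2) t ⊕ (Finset (Fin t) ⊕ (ZMod (e+2) × Fin s))

/-- Arc relation of the digraph `D`. -/
def ED (e t s : ℕ) : VD e t s → VD e t s → Prop
  | .inl u, .inl v => XArc u v
  | .inl u, .inr (.inl A) =>
      (u.1 ⟨0, by omega⟩ ∈ A) ∧ (u.1 ⟨e+1, by omega⟩ ∉ A)
  | .inl _, .inr (.inr _) => False
  | .inr (.inl _), .inl _ => False
  | .inr (.inl _), .inr (.inl _) => False
  | .inr (.inl _), .inr (.inr r) => r.1 = 0
  | .inr (.inr _), .inl _ => False
  | .inr (.inr _), .inr (.inl _) => False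
  | .inr (.inr r), .inr (.inr r') => r'.1 = r.1 + 1

lemma ED_irrefl (e t s : ℕ) : ∀ w : VD e t s, ¬ ED e t s w w := by
  haveI : Fact (1 < e + 2) := ⟨by omega⟩
  rintro (u | A | r) h
  · exact XArc_ne (by omega) h rfl
  · exact h
  · have h' : r.1 = r.1 + 1 := h
    have h1 : (1 : ZMod (e+2)) = 0 := by
      have h2 := h'.symm
      rwa [add_eq_left] at h2
    exact one_ne_zero h1

/-- Coordinates shift along walks inside the shift part. -/
lemma xwalkV (e t s : ℕ) (g : ℕ → VD e t s)
    (ha : ∀ j < e+1, ED e t s (g j) (g (j+1))) :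
    ∀ j, j ≤ e+1 → ∀ u x, g 0 = Sum.inl u → g j = Sum.inl x →
      ∀ i, ∀ hij : i + j ≤ e+1, x.1 ⟨i, by omega⟩ = u.1 ⟨i + j, by omega⟩ := by
  intro j
  induction j with
  | zero =>
    intro _ u x h0 hj i hij
    rw [h0] at hj
    have hxu : x = u := Sum.inl.inj hj.symm
    subst hxu
    exact congrArg x.1 (Fin.ext (show i = i + 0 by omega))
  | succ j ih =>
    intro hj u x h0 hj1 i hij
    have harc := ha j (by omega)
    rw [hj1] at harc
    rcases hgj : g j with y | B | r
    · rw [hgj] at harc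
      have h1 : x.1 ⟨i, by omega⟩ = y.1 ⟨i+1, by omega⟩ := harc i (by omega)
      rw [h1, ih (by omega) u y h0 hgj (i+1) (by omega)]
      exact congrArg u.1 (Fin.ext (show i + 1 + j = i + (j+1) by omega))
    · rw [hgj] at harc; exact harc.elim
    · rw [hgj] at harc; exact harc.elim

/-- The digraph `D` contains no directed `(e+2)`-walk together with a shortcut arc. -/
lemma noWalk (e t s : ℕ) (g : ℕ → VD e t s)
    (ha : ∀ j < e + 2, ED e t s (g j) (g (j+1)))
    (hsc : ED e t s (g 0) (g (e+2))) : False := by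
  classical
  have ha' : ∀ j < e + 1, ED e t s (g j) (g (j+1)) := fun j hj => ha j (by omega)
  rcases h0 : g 0 with u | A | r
  · -- start in the shift part X
    rcases hend : g (e+2) with z | B | rz
    · -- shortcut inside X
      have hshort : XArc u z := by
        have h := hsc; rw [h0, hend] at h; exact h
      have hlastarc := ha (e+1) (by omega)
      rw [hend] at hlastarc
      rcases hge1 : g (e+1) with x' | B' | r'
      · rw [hge1] at hlastarc
        have p0 : (0:ℕ) < e+2 := by omega
        have p1 : (1:ℕ) < e+2 := by omega
        have pe : e+1 < e+2 := by omega
        have hw := xwalkV e t s g ha' (e+1) (le_refl _) u x' h0 hge1 0 (by omega)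
        have hw' : x'.1 ⟨0, p0⟩ = u.1 ⟨e+1, pe⟩ := by
          rw [hw]
          exact congrArg u.1 (Fin.ext (show 0 + (e+1) = e+1 by omega))
        have h2 : z.1 ⟨0, p0⟩ = x'.1 ⟨1, p1⟩ := hlastarc 0 (by omega)
        have h3 : z.1 ⟨0, p0⟩ = u.1 ⟨1, p1⟩ := hshort 0 (by omega)
        have hmono1 : x'.1 ⟨0, p0⟩ < x'.1 ⟨1, p1⟩ :=
          x'.2 (Fin.mk_lt_mk.mpr (by omega))
        have hmono2 : u.1 ⟨1, p1⟩ ≤ u.1 ⟨e+1, pe⟩ :=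
          u.2.monotone (Fin.mk_le_mk.mpr (by omega))
        have hchain : u.1 ⟨e+1, pe⟩ < u.1 ⟨e+1, pe⟩ :=
          calc u.1 ⟨e+1, pe⟩ = x'.1 ⟨0, p0⟩ := hw'.symm
            _ < x'.1 ⟨1, p1⟩ := hmono1
            _ = z.1 ⟨0, p0⟩ := h2.symm
            _ = u.1 ⟨1, p1⟩ := h3
            _ ≤ u.1 ⟨e+1, pe⟩ := hmono2
        exact absurd hchain (lt_irrefl _)
      · rw [hge1] at hlastarc; exact hlastarc.elim
      · rw [hge1] at hlastarc; exact hlastarc.elim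
    · -- shortcut into a cut vertex
      have hshort : (u.1 ⟨0, by omega⟩ ∈ B) ∧ (u.1 ⟨e+1, by omega⟩ ∉ B) := by
        have h := hsc; rw [h0, hend] at h; exact h
      obtain ⟨-, hnotin⟩ := hshort
      have hlast := ha (e+1) (by omega)
      rw [hend] at hlast
      rcases hge1 : g (e+1) with x' | B' | r'
      · rw [hge1] at hlast
        have p0 : (0:ℕ) < e+2 := by omega
        have pe : e+1 < e+2 := by omega
        have hin' : x'.1 ⟨0, p0⟩ ∈ B := hlast.1
        have hnotin' : u.1 ⟨e+1, pe⟩ ∉ B := hnotin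
        have hw := xwalkV e t s g ha' (e+1) (le_refl _) u x' h0 hge1 0 (by omega)
        have hw' : x'.1 ⟨0, p0⟩ = u.1 ⟨e+1, pe⟩ := by
          rw [hw]
          exact congrArg u.1 (Fin.ext (show 0 + (e+1) = e+1 by omega))
        exact hnotin' (hw' ▸ hin')
      · rw [hge1] at hlast; exact hlast.elim
      · rw [hge1] at hlast; exact hlast.elim
    · -- shortcut X → R impossible
      have h := hsc; rw [h0, hend] at h; exact h.elim
  · -- start in the cut part Y
    have h1 := ha 0 (by omega)
    rw [h0] at h1
    rcases hg1 : g 1 with x | B | r1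
    · rw [hg1] at h1; exact h1.elim
    · rw [hg1] at h1; exact h1.elim
    · rw [hg1] at h1
      have hfst1 : r1.1 = 0 := h1
      have hR : ∀ j, j ≤ e+1 →
          ∃ y, g (1+j) = Sum.inr (Sum.inr ((j : ZMod (e+2)), y)) := by
        intro j
        induction j with
        | zero =>
          intro _
          refine ⟨r1.2, ?_⟩
          have hr1 : r1 = ((0 : ZMod (e+2)), r1.2) := Prod.ext_iff.mpr ⟨hfst1, rfl⟩
          simp only [Nat.add_zero, hg1, Nat.cast_zero]
          exact congrArg Sum.inr (congrArg Sum.inr hr1)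
        | succ j ih =>
          intro hj
          obtain ⟨y, hy⟩ := ih (by omega)
          have harc := ha (1+j) (by omega)
          rw [hy] at harc
          rcases hgj : g (1+j+1) with x | B' | r'
          · rw [hgj] at harc; exact harc.elim
          · rw [hgj] at harc; exact harc.elim
          · rw [hgj] at harc
            have hfst : r'.1 = ((j+1 : ℕ) : ZMod (e+2)) := by
              have h : r'.1 = (j : ZMod (e+2)) + 1 := harc
              rw [h]; push_cast; ring
            refine ⟨r'.2, ?_⟩
            have hstep : (1 : ℕ) + (j+1) = 1 + j + 1 := by omega
            exact congrArg Sum.inr (congrArg Sum.inr (Prod.ext_iff.mpr ⟨hfst, rfl⟩))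
      obtain ⟨y, hy⟩ := hR (e+1) (le_refl _)
      rw [show (1+(e+1) : ℕ) = e+2 by omega] at hy
      have hsc' := hsc
      rw [h0, hy] at hsc'
      have hzero : ((e+1 : ℕ) : ZMod (e+2)) = 0 := hsc'
      rw [ZMod.natCast_eq_zero_iff] at hzero
      have := Nat.le_of_dvd (by omega) hzero
      omega
  · -- start in the cyclic part R
    have hR : ∀ j, j ≤ e+2 →
        ∃ y, g j = Sum.inr (Sum.inr (r.1 + (j : ZMod (e+2)), y)) := by
      intro j
      induction j with
      | zero =>
        intro _
        refine ⟨r.2, ?_⟩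
        have hr : r = (r.1 + ((0:ℕ) : ZMod (e+2)), r.2) :=
          Prod.ext_iff.mpr ⟨by simp, rfl⟩
        rw [h0]
        exact congrArg Sum.inr (congrArg Sum.inr hr)
      | succ j ih =>
        intro hj
        obtain ⟨y, hy⟩ := ih (by omega)
        have harc := ha j (by omega)
        rw [hy] at harc
        rcases hgj : g (j+1) with x | B' | r'
        · rw [hgj] at harc; exact harc.elim
        · rw [hgj] at harc; exact harc.elim
        · rw [hgj] at harc
          have hfst : r'.1 = r.1 + ((j+1 : ℕ) : ZMod (e+2)) := by
            have h : r'.1 = r.1 + (j : ZMod (e+2)) + 1 := harc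
            rw [h]; push_cast; ring
          refine ⟨r'.2, ?_⟩
          exact congrArg Sum.inr (congrArg Sum.inr (Prod.ext_iff.mpr ⟨hfst, rfl⟩))
    obtain ⟨y, hy⟩ := hR (e+2) (le_refl _)
    have hsc' := hsc
    rw [h0, hy] at hsc'
    have hfst : r.1 + ((e+2 : ℕ) : ZMod (e+2)) = r.1 + 1 := hsc'
    rw [ZMod.natCast_self, add_zero] at hfst
    have h1 : (1 : ZMod (e+2)) = 0 := by
      have h2 := hfst
      rwa [left_eq_add] at h2
    haveI : Fact (1 < e + 2) := ⟨by omega⟩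
    exact one_ne_zero h1

/-! ### Counting -/

lemma card_VD (e t s : ℕ) :
    Fintype.card (VD e t s) =
      Fintype.card (XV (e+2) t) + (2^t + (e+2) * s) := by
  rw [Fintype.card_sum, Fintype.card_sum, Fintype.card_prod, Fintype.card_finset,
    Fintype.card_fin, ZMod.card, Fintype.card_fin]

lemma sq_le_two_pow : ∀ m : ℕ, 4 ≤ m → m * m ≤ 2^m := by
  intro m hm
  induction m, hm using Nat.le_induction with
  | base => norm_num
  | succ m hm ih =>
    have h4 : 4 * m ≤ m * m := Nat.mul_le_mul_right m (by omega)
    have hexp : (m+1) * (m+1) = m*m + 2*m + 1 := by ring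
    rw [hexp, pow_succ]
    omega

/-- every vertex of `D` (with `s = 2^(t-2)`) has out-degree at least `2^(t-2)`. -/
lemma deg_ge (e t : ℕ) (w : VD e t (2^(t-2))) :
    2^(t-2) ≤ Nat.card {v : VD e t (2^(t-2)) // ED e t (2^(t-2)) w v} := by
  classical
  rcases w with u | A | r
  · -- shift vertices point to all suitable cut vertices
    have p0 : (0:ℕ) < e+2 := by omega
    have pe : e+1 < e+2 := by omega
    set u0 : Fin t := u.1 ⟨0, p0⟩ with hu0def
    set ul : Fin t := u.1 ⟨e+1, pe⟩ with huldef
    have hne : u0 ≠ ul := ne_of_lt (u.2 (Fin.mk_lt_mk.mpr (by omega)))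
    set T : Finset (Fin t) := ({u0, ul} : Finset (Fin t))ᶜ with hTdef
    have hmapT : ∀ B : Finset ↥T, ∀ x ∈ B.map (Function.Embedding.subtype _), x ∈ T := by
      intro B x hx
      obtain ⟨y, -, hye⟩ := Finset.mem_map.mp hx
      rw [← hye]
      exact y.2
    have hprop : ∀ B : Finset ↥T,
        ED e t (2^(t-2)) (Sum.inl u)
          (Sum.inr (Sum.inl (insert u0 (B.map (Function.Embedding.subtype _))))) := by
      intro B
      constructor
      · exact Finset.mem_insert_self _ _
      · intro hmem
        rcases Finset.mem_insert.mp hmem with h | h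
        · exact hne h.symm
        · have hT := hmapT B _ h
          rw [hTdef, Finset.mem_compl] at hT
          exact hT (by simp [huldef])
    set F : Finset ↥T → {v : VD e t (2^(t-2)) // ED e t (2^(t-2)) (Sum.inl u) v} :=
      fun B => ⟨_, hprop B⟩ with hFdef
    have hu0notmem : ∀ B : Finset ↥T, u0 ∉ B.map (Function.Embedding.subtype _) := by
      intro B hmem
      have hT := hmapT B _ hmem
      rw [hTdef, Finset.mem_compl] at hT
      exact hT (by simp)
    have hinj : Function.Injective F := by
      intro B1 B2 h
      have h1 := congrArg Subtype.val h
      simp only [hFdef] at h1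
      have h2 : insert u0 (B1.map (Function.Embedding.subtype _)) =
          insert u0 (B2.map (Function.Embedding.subtype _)) := by
        exact Sum.inl.inj (Sum.inr.inj h1)
      have h3 : B1.map (Function.Embedding.subtype _) =
          B2.map (Function.Embedding.subtype _) := by
        rw [← Finset.erase_insert (hu0notmem B1), ← Finset.erase_insert (hu0notmem B2), h2]
      exact Finset.map_injective _ h3
    have hcard := Nat.card_le_card_of_injective F hinj
    have hTcard : T.card = t - 2 := by
      rw [hTdef, Finset.card_compl, Finset.card_pair hne, Fintype.card_fin]
    have hsrc : Nat.card (Finset ↥T) = 2^(t-2) := by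
      rw [Nat.card_eq_fintype_card, Fintype.card_finset, Fintype.card_coe, hTcard]
    rw [hsrc] at hcard
    exact hcard
  · -- cut vertices point to all of level 0
    set F : Fin (2^(t-2)) → {v : VD e t (2^(t-2)) // ED e t (2^(t-2)) (Sum.inr (Sum.inl A)) v} :=
      fun b => ⟨Sum.inr (Sum.inr ((0 : ZMod (e+2)), b)), rfl⟩ with hFdef
    have hinj : Function.Injective F := by
      intro b1 b2 h
      have h1 := congrArg Subtype.val h
      simp only [hFdef] at h1
      have h2 := Sum.inr.inj (Sum.inr.inj h1)
      exact (Prod.ext_iff.mp h2).2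
    have hcard := Nat.card_le_card_of_injective F hinj
    rwa [Nat.card_eq_fintype_card, Fintype.card_fin] at hcard
  · -- cyclic vertices point to all of the next level
    set F : Fin (2^(t-2)) → {v : VD e t (2^(t-2)) // ED e t (2^(t-2)) (Sum.inr (Sum.inr r)) v} :=
      fun b => ⟨Sum.inr (Sum.inr (r.1 + 1, b)), rfl⟩ with hFdef
    have hinj : Function.Injective F := by
      intro b1 b2 h
      have h1 := congrArg Subtype.val h
      simp only [hFdef] at h1
      have h2 := Sum.inr.inj (Sum.inr.inj h1)
      exact (Prod.ext_iff.mp h2).2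
    have hcard := Nat.card_le_card_of_injective F hinj
    rwa [Nat.card_eq_fintype_card, Fintype.card_fin] at hcard

/-! ### Structure of two-block orientations with a short block -/

lemma o_shape (e : ℕ) (o : ZMod (e+3) → Bool)
    (hbc : blockCount o = 2) (hsb : hasShortBlock o) :
    ∃ i : ZMod (e+3), (o (i+1) = !(o i)) ∧ ∀ l : ZMod (e+3), l ≠ i + 1 → o l = o i := by
  haveI : NeZero (e+3) := ⟨by omega⟩
  obtain ⟨i, h1, h2⟩ := hsb
  refine ⟨i, ?_, ?_⟩
  · cases hoi : o i <;> cases hoi1 : o (i+1) <;> simp_all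
  · unfold blockCount at hbc
    split_ifs at hbc with hconst
    · exact absurd (((hconst i).trans (hconst (i+1)).symm)) h1
    · have hsub : ({i, i+1} : Set (ZMod (e+3))) ⊆ {l : ZMod (e+3) | o l ≠ o (l + 1)} := by
        intro l hl
        rcases hl with h | h
        · subst h; exact h1
        · rw [Set.mem_singleton_iff] at h; subst h
          show o (i+1) ≠ o (i+1+1)
          have hidx : i + 2 = i + 1 + 1 := by ring
          rw [← hidx]
          exact h2
      have hii : i ≠ i + 1 := by
        intro h
        have h' : (1 : ZMod (e+3)) = 0 := by
          have h'' := h.symm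
          rwa [add_eq_left] at h''
        have h0 : ((1:ℕ) : ZMod (e+3)) = 0 := by exact_mod_cast h'
        rw [ZMod.natCast_eq_zero_iff] at h0
        have := Nat.le_of_dvd (by omega) h0
        omega
      have hSeq : ({i, i+1} : Set (ZMod (e+3))) = {l : ZMod (e+3) | o l ≠ o (l + 1)} := by
        apply Set.eq_of_subset_of_ncard_le hsub
        rw [hbc, Set.ncard_pair hii]
      have hnochange : ∀ l : ZMod (e+3), l ≠ i → l ≠ i + 1 → o l = o (l + 1) := by
        intro l hl1 hl2
        by_contra hne
        have hmem : l ∈ ({i, i+1} : Set (ZMod (e+3))) := by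
          rw [hSeq]; exact hne
        rcases hmem with h | h
        · exact hl1 h
        · exact hl2 h
      have hval2 : o (i + 2) = o i := by
        cases hoi : o i <;> cases hoi1 : o (i+1) <;> cases hoi2 : o (i+2) <;> simp_all
      have hprop : ∀ j : ℕ, j ≤ e+1 → o (i + 2 + (j : ZMod (e+3))) = o i := by
        intro j
        induction j with
        | zero => intro _; simpa using hval2
        | succ j ih =>
          intro hj
          have hoj := ih (by omega)
          have hne1 : i + 2 + (j : ZMod (e+3)) ≠ i := by
            intro hEq
            have hc : ((j + 2 : ℕ) : ZMod (e+3)) = 0 := by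
              push_cast
              linear_combination hEq
            rw [ZMod.natCast_eq_zero_iff] at hc
            have := Nat.le_of_dvd (by omega) hc
            omega
          have hne2 : i + 2 + (j : ZMod (e+3)) ≠ i + 1 := by
            intro hEq
            have hc : ((j + 1 : ℕ) : ZMod (e+3)) = 0 := by
              push_cast
              linear_combination hEq
            rw [ZMod.natCast_eq_zero_iff] at hc
            have := Nat.le_of_dvd (by omega) hc
            omega
          have hstep := hnochange _ hne1 hne2
          have hidx : i + 2 + ((j+1 : ℕ) : ZMod (e+3)) = i + 2 + (j : ZMod (e+3)) + 1 := by
            push_cast; ring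
          calc o (i + 2 + ((j+1 : ℕ) : ZMod (e+3)))
              = o (i + 2 + (j : ZMod (e+3)) + 1) := by rw [hidx]
            _ = o (i + 2 + (j : ZMod (e+3))) := hstep.symm
            _ = o i := hoj
      intro l hl
      have hjlt : (l - (i+2)).val < e+3 := ZMod.val_lt _
      have hlj : l = i + 2 + (((l - (i+2)).val : ℕ) : ZMod (e+3)) := by
        rw [ZMod.natCast_val, ZMod.cast_id]
        ring
      have hje : (l - (i+2)).val ≠ e+2 := by
        intro hEq
        apply hl
        rw [hlj, hEq]
        have h0 : ((e+3 : ℕ) : ZMod (e+3)) = 0 := ZMod.natCast_self _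
        push_cast at h0 ⊢
        linear_combination h0
      rw [hlj]
      exact hprop _ (by omega)

/-! ### From a containment of the oriented cycle to a shortcut walk -/

lemma walk_of_contains (e : ℕ) {V : Type} (E : V → V → Prop) (o : ZMod (e+3) → Bool)
    (i : ZMod (e+3)) (hflip : o (i+1) = !(o i)) (hconst : ∀ l, l ≠ i+1 → o l = o i)
    (hc : ContainsDigraph E (cycleOrient o)) :
    ∃ g : ℕ → V, (∀ j < e+2, E (g j) (g (j+1))) ∧ E (g 0) (g (e+2)) := by
  haveI : NeZero (e+3) := ⟨by omega⟩
  obtain ⟨f, -, hf⟩ := hc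
  have hcast1 : ∀ j : ℕ, j < e + 2 → ((j + 1 : ℕ) : ZMod (e+3)) ≠ 0 := by
    intro j hj hEq
    rw [ZMod.natCast_eq_zero_iff] at hEq
    have := Nat.le_of_dvd (by omega) hEq
    omega
  have hcastlast : ((e+2 : ℕ) : ZMod (e+3)) = -1 := by
    have h0 : ((e+3 : ℕ) : ZMod (e+3)) = 0 := ZMod.natCast_self _
    push_cast at h0 ⊢
    linear_combination h0
  cases hb : o i
  · -- all arcs point "backwards": o l = false for l ≠ i+1, o (i+1) = true
    refine ⟨fun j => f (i + 1 - (j : ℕ)), ?_, ?_⟩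
    · intro j hj
      apply hf
      show cycleOrient o (i + 1 - (j:ℕ)) (i + 1 - ((j+1 : ℕ) : ZMod (e+3)))
      right
      constructor
      · have hne : i + 1 - ((j+1 : ℕ) : ZMod (e+3)) ≠ i + 1 := by
          intro hEq
          exact hcast1 j hj (by linear_combination -hEq)
        rw [hconst _ hne, hb]
      · push_cast
        ring
    · apply hf
      show cycleOrient o (i + 1 - ((0:ℕ) : ZMod (e+3))) (i + 1 - ((e+2 : ℕ) : ZMod (e+3)))
      left
      constructor
      · have hidx : i + 1 - ((0:ℕ) : ZMod (e+3)) = i + 1 := by push_cast; ring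
        rw [hidx, hflip, hb]
        rfl
      · rw [hcastlast]
        push_cast
        ring
  · -- all arcs point "forwards": o l = true for l ≠ i+1, o (i+1) = false
    refine ⟨fun j => f (i + 2 + (j : ℕ)), ?_, ?_⟩
    · intro j hj
      apply hf
      show cycleOrient o (i + 2 + (j:ℕ)) (i + 2 + ((j+1 : ℕ) : ZMod (e+3)))
      left
      constructor
      · have hne : i + 2 + (j : ℕ) ≠ i + 1 := by
          intro hEq
          apply hcast1 j hj
          push_cast
          linear_combination hEq
        rw [hconst _ hne, hb]
      · push_cast
        ring
    · apply hf
      show cycleOrient o (i + 2 + ((0:ℕ) : ZMod (e+3))) (i + 2 + ((e+2 : ℕ) : ZMod (e+3)))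
      right
      constructor
      · have hidx : i + 2 + ((e+2 : ℕ) : ZMod (e+3)) = i + 1 := by
          rw [hcastlast]; ring
        rw [hidx, hflip, hb]
        rfl
      · rw [hcastlast]
        push_cast
        ring

end FlippedAux

open FlippedAux

/-- Theorem 3.6. For each integer `k ≥ 3` there exists `ε > 0` such that for all
integers `n` and `c`, and for each orientation `C` of the `k`-cycle consisting of
exactly two blocks, one of which has length one, there is a digraph `D` without loops
or parallel arcs with `|V(D)| ≥ n`, `χ(D) ≥ c`, and minimum out-degree at least
`ε·|V(D)|`, which does not contain a subdigraph isomorphic to `C`. -/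
theorem counterexample_flipped_cycle (k : ℕ) (hk : 3 ≤ k) :
    ∃ ε : ℝ, 0 < ε ∧ ∀ n c : ℕ, ∀ o : ZMod k → Bool,
      blockCount o = 2 → hasShortBlock o →
      ∃ (N : ℕ) (E : Fin N → Fin N → Prop),
        (∀ v, ¬ E v v) ∧ n ≤ N ∧
        (c : ℕ∞) ≤ (SimpleGraph.fromRel E).chromaticNumber ∧
        (∀ v : Fin N, ε * (N : ℝ) ≤ (Nat.card {u : Fin N // E v u} : ℝ)) ∧
        ¬ ContainsDigraph E (cycleOrient o) := by
  classical
  obtain ⟨e, rfl⟩ : ∃ e, k = e + 3 := ⟨k - 3, by omega⟩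
  refine ⟨1/((e:ℝ)+7), by positivity, ?_⟩
  intro n c o hbc hsb
  obtain ⟨i, hflip, hconst⟩ := o_shape e o hbc hsb
  set m : ℕ := max (max 4 (e+3)) (max n (tw (e+2) c)) with hmdef
  have hm4 : 4 ≤ m := le_trans (le_max_left _ _) (le_max_left _ _)
  have hmk : e+3 ≤ m := le_trans (le_max_right _ _) (le_max_left _ _)
  have hmn : n ≤ m := le_trans (le_max_left _ _) (le_max_right _ _)
  have hmtw : tw (e+2) c ≤ m := le_trans (le_max_right _ _) (le_max_right _ _)
  set t : ℕ := 2^m with htdef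
  have hmt : m < t := Nat.lt_two_pow_self
  have ht16 : 16 ≤ t := by
    calc (16:ℕ) = 2^4 := by norm_num
      _ ≤ 2^m := Nat.pow_le_pow_right (by norm_num) hm4
  have hmsq : m * m ≤ 2^m := sq_le_two_pow m hm4
  have hmd : m * (e+2) + 2 ≤ t := by
    have h1 : m*(e+2) + m = m*(e+3) := by ring
    have h2 : m*(e+3) ≤ m*m := Nat.mul_le_mul_left m hmk
    omega
  have hX : Fintype.card (XV (e+2) t) ≤ 2^(t-2) := by
    have h := Fintype.card_le_of_injective (fun v : XV (e+2) t => v.1)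
      (fun a b hab => Subtype.ext hab)
    rw [Fintype.card_fun, Fintype.card_fin, Fintype.card_fin] at h
    have h2 : t^(e+2) = 2^(m*(e+2)) := by rw [htdef, ← pow_mul]
    have h3 : 2^(m*(e+2)) ≤ 2^(t-2) := Nat.pow_le_pow_right (by norm_num) (by omega)
    omega
  set N : ℕ := Fintype.card (VD e t (2^(t-2))) with hNdef
  have hNeq : N = Fintype.card (XV (e+2) t) + (2^t + (e+2) * 2^(t-2)) := card_VD e t _
  have h2t : 2^t = 4 * 2^(t-2) := by
    have h : t - 2 + 2 = t := by omega
    calc 2^t = 2^(t-2+2) := by rw [h]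
      _ = 2^(t-2) * 2^2 := pow_add 2 _ 2
      _ = 4 * 2^(t-2) := by ring
  have hNle : N ≤ (e+7) * 2^(t-2) := by
    have h : (e+7) * 2^(t-2) = 2^(t-2) + 4 * 2^(t-2) + (e+2) * 2^(t-2) := by ring
    omega
  set eqv : VD e t (2^(t-2)) ≃ Fin N := Fintype.equivFin _ with heqv
  refine ⟨N, fun a b => ED e t (2^(t-2)) (eqv.symm a) (eqv.symm b), ?_, ?_, ?_, ?_, ?_⟩
  · -- irreflexive
    intro v
    exact ED_irrefl e t (2^(t-2)) (eqv.symm v)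
  · -- size
    have h2 : t < 2^t := Nat.lt_two_pow_self
    have h3 : 2^t ≤ N := by omega
    omega
  · -- chromatic number
    have key : ∀ q : ℕ,
        (SimpleGraph.fromRel (fun a b =>
          ED e t (2^(t-2)) (eqv.symm a) (eqv.symm b))).Colorable q → c ≤ q := by
      intro q hq
      by_contra hlt
      push_neg at hlt
      obtain ⟨C⟩ := hq
      have hproper : ∀ u v : XV (e+2) t, XArc u v →
          C (eqv (Sum.inl u)) ≠ C (eqv (Sum.inl v)) := by
        intro u v harc
        have hne : u ≠ v := XArc_ne (by omega) harc
        apply C.valid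
        rw [SimpleGraph.fromRel_adj]
        constructor
        · intro h
          exact hne (Sum.inl.inj (eqv.injective h))
        · left
          show ED e t (2^(t-2)) (eqv.symm (eqv (Sum.inl u))) (eqv.symm (eqv (Sum.inl v)))
          rw [Equiv.symm_apply_apply, Equiv.symm_apply_apply]
          exact harc
      have hbound := shift_bound t e (Fin q)
        (fun u => C (eqv (Sum.inl u))) hproper
      rw [Fintype.card_fin] at hbound
      have hq' : tw (e+2) q ≤ tw (e+2) c := tw_mono _ (le_of_lt hlt)
      omega
    rw [SimpleGraph.chromaticNumber_eq_biInf]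
    refine le_iInf₂ ?_
    intro q hq
    exact_mod_cast key q hq
  · -- out-degrees
    intro v
    show (1/((e:ℝ)+7)) * N ≤
      (Nat.card {u : Fin N // ED e t (2^(t-2)) (eqv.symm v) (eqv.symm u)} : ℝ)
    have hcongr : Nat.card {u : Fin N // ED e t (2^(t-2)) (eqv.symm v) (eqv.symm u)}
        = Nat.card {w : VD e t (2^(t-2)) // ED e t (2^(t-2)) (eqv.symm v) w} :=
      Nat.card_congr (Equiv.subtypeEquiv eqv.symm (fun u => Iff.rfl))
    rw [hcongr]
    have hdeg := deg_ge e t (eqv.symm v)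
    have hD : ((2:ℝ))^(t-2) ≤
        (Nat.card {w : VD e t (2^(t-2)) // ED e t (2^(t-2)) (eqv.symm v) w} : ℝ) := by
      exact_mod_cast hdeg
    have hNR : (N:ℝ) ≤ ((e:ℝ)+7) * 2^(t-2) := by
      exact_mod_cast hNle
    have hpos : (0:ℝ) < (e:ℝ) + 7 := by positivity
    calc (1/((e:ℝ)+7)) * N ≤ (1/((e:ℝ)+7)) * (((e:ℝ)+7) * 2^(t-2)) := by
          apply mul_le_mul_of_nonneg_left hNR (by positivity)
      _ = (2:ℝ)^(t-2) := by field_simp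
      _ ≤ _ := hD
  · -- no copy of the oriented cycle
    intro hc
    obtain ⟨g, hg1, hg2⟩ := walk_of_contains e
      (fun a b => ED e t (2^(t-2)) (eqv.symm a) (eqv.symm b)) o i hflip hconst hc
    exact noWalk e t (2^(t-2)) (fun j => eqv.symm (g j)) (fun j hj => hg1 j hj) hg2
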